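/- Let 2 ≤ n ≤ N−1 and assume the step ratios satisfy 0 < r_k < (3+√17)/2 for 2 ≤ k ≤ N. For 1 ≤ m ≤ n let B̃₂^{(m)} be the m×m lower bidiagonal matrix with k-th diagonal entry (1+2r_k)/(1+r_k) and k-th subdiagonal entry −r_k^{3/2}/(1+r_k) (with r_1 := 0), let B̃^{(m)} := B̃₂^{(m)} + (B̃₂^{(m)})ᵀ, and define M_r := max_{1≤m≤n} λ_max((B̃₂^{(m)})ᵀ B̃₂^{(m)}) / λ_min(B̃^{(m)})², where λ_max and λ_min denote the largest and smallest eigenvalue of a real symmetric matrix. Then for any ε > 0 and any vectors v^k, z^k, w^k ∈ ℝ² (1 ≤ k ≤ n), one has Σ_{k=1}^{n} Σ_{j=1}^{k} θ_{k−j}^{(k)} ⟨z^k, f(v^j + w^j) − f(v^j)⟩ ≤ Σ_{k=1}^{n} Σ_{j=1}^{k} θ_{k−j}^{(k)} ( ε ⟨z^k, z^j⟩ + (M_r/ε) ⟨w^k, w^j⟩ ). Consequently, Σ_{k=1}^{n} Σ_{j=1}^{k} θ_{k−j}^{(k)} ⟨z^k, f(v^j + z^j) − f(v^j)⟩ ≤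 2√(M_r) Σ_{k=1}^{n} Σ_{j=1}^{k} θ_{k−j}^{(k)} ⟨z^k, z^j⟩. -/

import Mathlib

open Finset Matrix

/-- BDF2 kernels `b_j^{(n)}` (assuming `r 1 = 0`, so the `n = 1` case
`b_0^{(1)} = 1/τ_1` is subsumed by the general formula). -/
noncomputable def bk (τ r : ℕ → ℝ) (n j : ℕ) : ℝ :=
  if j = 0 then (1 + 2 * r n) / (τ n * (1 + r n))
  else if j = 1 then -(r n) ^ 2 / (τ n * (1 + r n))
  else 0

/-- DOC kernels: `th τ r n m = θ_m^{(n)}`, i.e. `θ_{n-k}^{(n)}` with `m = n - k`. -/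
noncomputable def th (τ r : ℕ → ℝ) (n : ℕ) : ℕ → ℝ
  | 0 => 1 / bk τ r n 0
  | m + 1 => -(1 / bk τ r (n - (m + 1)) 0) *
      ∑ i ∈ (Finset.range (m + 1)).attach,
        th τ r n i.1 * bk τ r (n - i.1) (m + 1 - i.1)
  decreasing_by exact Finset.mem_range.mp i.2

/-- The `m × m` lower bidiagonal matrix `B̃₂^{(m)}` with `k`-th diagonal entry
`(1+2r_k)/(1+r_k)` and `k`-th subdiagonal entry `−r_k^{3/2}/(1+r_k)`. -/
noncomputable def Bt2 (r : ℕ → ℝ) (m : ℕ) : Matrix (Fin m) (Fin m) ℝ :=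
  Matrix.of fun k j =>
    if (k : ℕ) = (j : ℕ) then
      (1 + 2 * r ((k : ℕ) + 1)) / (1 + r ((k : ℕ) + 1))
    else if (j : ℕ) + 1 = (k : ℕ) then
      -(r ((k : ℕ) + 1) * Real.sqrt (r ((k : ℕ) + 1))) / (1 + r ((k : ℕ) + 1))
    else 0

/-- Largest eigenvalue of a real symmetric matrix (junk value `0` otherwise). -/
noncomputable def lamMax {m : ℕ} (A : Matrix (Fin m) (Fin m) ℝ) : ℝ :=
  if h : A.IsHermitian then ⨆ i, h.eigenvalues i else 0

/-- Smallest eigenvalue of a real symmetric matrix (junk value `0` otherwise). -/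
noncomputable def lamMin {m : ℕ} (A : Matrix (Fin m) (Fin m) ℝ) : ℝ :=
  if h : A.IsHermitian then ⨅ i, h.eigenvalues i else 0

/-- The quantity `λ_max((B̃₂^{(m)})ᵀ B̃₂^{(m)}) / λ_min(B̃^{(m)})²`. -/
noncomputable def Mrq (r : ℕ → ℝ) (m : ℕ) : ℝ :=
  lamMax ((Bt2 r m)ᵀ * Bt2 r m) / (lamMin (Bt2 r m + (Bt2 r m)ᵀ)) ^ 2

/-- The nonlinear force vector `f(u) := u/(1+|u|²)` for `u ∈ ℝ²`. -/
noncomputable def fvec (u : Fin 2 → ℝ) : Fin 2 → ℝ :=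
  fun i => u i / (1 + ∑ j, (u j) ^ 2)

/-! ### Auxiliary lemmas -/

section Aux

set_option maxHeartbeats 1000000

lemma abstractD (α β p : ℝ) (hα : 0 ≤ α) (hβ : 0 ≤ β) (hp : p^2 ≤ α*β) :
    0 ≤ (α+β-2*p)*((1+α)^2*(1+β)^2) - (α + β + 4*(α*β) + α*β*(α+β) - 2*p*((1+α)*(1+β))) := by
  rcases eq_or_lt_of_le (add_nonneg hα hβ) with hs | hs
  · have hα0 : α = 0 := by nlinarith
    have hβ0 : β = 0 := by nlinarith
    have hp0 : p = 0 := by nlinarith [sq_nonneg p]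
    simp [hα0, hβ0, hp0]
  · have h1 : 0 ≤ (α-β)^2 * ((α*β + (α*β)^2 + 3*(α+β) + 2*(α+β)*(α*β) + (α+β)^2)/2) := by
      positivity
    have h2 : 0 ≤ 2*((1+(α+β)+α*β)*((α+β)+α*β)) * (α*β - p^2) :=
      mul_nonneg (by positivity) (by linarith)
    have h3 : 0 ≤ 2*((1+(α+β)+α*β)*((α+β)+α*β)) * (p - (α+β)/2)^2 := by positivity
    have iden : (α-β)^2 * ((α*β + (α*β)^2 + 3*(α+β) + 2*(α+β)*(α*β) + (α+β)^2)/2)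
        + 2*((1+(α+β)+α*β)*((α+β)+α*β)) * (α*β - p^2)
        + 2*((1+(α+β)+α*β)*((α+β)+α*β)) * (p - (α+β)/2)^2
        = (α+β) * ((α+β-2*p)*((1+α)^2*(1+β)^2)
            - (α + β + 4*(α*β) + α*β*(α+β) - 2*p*((1+α)*(1+β)))) := by ring
    have key : 0 ≤ (α+β) * ((α+β-2*p)*((1+α)^2*(1+β)^2)
        - (α + β + 4*(α*β) + α*β*(α+β) - 2*p*((1+α)*(1+β)))) := by
      rw [← iden]; linarith
    exact nonneg_of_mul_nonneg_right key hs

/-- `f` is a (blockwise) contraction. -/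
lemma fvec_contract (a b : Fin 2 → ℝ) :
    ∑ i, (fvec a i - fvec b i)^2 ≤ ∑ i, (a i - b i)^2 := by
  have hp : (a 0 * b 0 + a 1 * b 1)^2 ≤ (a 0^2 + a 1^2) * (b 0^2 + b 1^2) := by
    nlinarith [sq_nonneg (a 0 * b 1 - a 1 * b 0)]
  have key := abstractD (a 0^2 + a 1^2) (b 0^2 + b 1^2) (a 0 * b 0 + a 1 * b 1)
    (by positivity) (by positivity) hp
  simp only [fvec, Fin.sum_univ_two]
  rw [div_sub_div _ _ (by positivity) (by positivity),
    div_sub_div _ _ (by positivity) (by positivity),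
    div_pow, div_pow, ← add_div, div_le_iff₀ (by positivity)]
  nlinarith [key]

/-- recursion for the DOC kernels -/
lemma th_zero (τ r : ℕ → ℝ) (n : ℕ) : th τ r n 0 = 1 / bk τ r n 0 := by
  simp [th]

lemma th_succ (τ r : ℕ → ℝ) (n m : ℕ) :
    th τ r n (m+1) = -(1 / bk τ r (n - (m+1)) 0) * (th τ r n m * bk τ r (n - m) 1) := by
  rw [th]
  congr 1
  rw [Finset.sum_attach (range (m+1)) (fun i => th τ r n i * bk τ r (n - i) (m + 1 - i))]
  rw [Finset.sum_eq_single_of_mem m (by simp)]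
  · norm_num
  · intro b hb hbm
    have hblt : b < m := lt_of_le_of_ne (Nat.lt_succ_iff.mp (mem_range.mp hb)) hbm
    have h1 : m + 1 - b ≠ 0 := by omega
    have h2 : m + 1 - b ≠ 1 := by omega
    simp [bk, h1, h2]

/-- the column recurrence for DOC kernels -/
lemma th_col (τ r : ℕ → ℝ) (k : ℕ) (hτ : τ (k+1) ≠ 0)
    (h1 : 1 + r (k+1) ≠ 0) (h2 : 1 + 2 * r (k+1) ≠ 0) :
    ∀ m, m + 1 ≤ k →
      th τ r (k+1) (m+1) = (r (k+1))^2 / (1 + 2 * r (k+1)) * th τ r k m := by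
  intro m
  induction m with
  | zero =>
    intro _
    rw [th_succ, th_zero, th_zero]
    have e1 : k + 1 - (0+1) = k := by omega
    have e2 : k + 1 - 0 = k + 1 := by omega
    rw [e1, e2]
    have hbk : bk τ r (k+1) 0 = (1 + 2 * r (k+1)) / (τ (k+1) * (1 + r (k+1))) := by
      simp [bk]
    have hbk1 : bk τ r (k+1) 1 = -(r (k+1)) ^ 2 / (τ (k+1) * (1 + r (k+1))) := by
      simp [bk]
    have key : -(1 / bk τ r (k+1) 0 * bk τ r (k+1) 1) = (r (k+1))^2 / (1 + 2 * r (k+1)) := by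
      rw [hbk, hbk1]
      have hτ1 : τ (k+1) * (1 + r (k+1)) ≠ 0 := mul_ne_zero hτ h1
      field_simp
    rw [← key]
    ring
  | succ m ih =>
    intro hm
    have ihm := ih (by omega)
    rw [th_succ τ r (k+1) (m+1), th_succ τ r k m]
    have e1 : k + 1 - (m+1+1) = k - (m+1) := by omega
    have e2 : k + 1 - (m+1) = k - m := by omega
    rw [e1, e2, ihm]
    ring

end Aux
section Aux2

set_option maxHeartbeats 1000000

/-- scaled inverse of `Bt2`, built from the DOC kernels -/
noncomputable def Cm (τ r : ℕ → ℝ) (n : ℕ) : Matrix (Fin n) (Fin n) ℝ :=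
  Matrix.of fun k j =>
    if (j : ℕ) ≤ (k : ℕ) then
      th τ r ((k : ℕ) + 1) ((k : ℕ) - (j : ℕ)) /
        (Real.sqrt (τ ((k : ℕ) + 1)) * Real.sqrt (τ ((j : ℕ) + 1)))
    else 0

lemma Cm_apply_pos (τ r : ℕ → ℝ) (n : ℕ) (k j : Fin n) (h : (j : ℕ) ≤ (k : ℕ)) :
    Cm τ r n k j = th τ r ((k : ℕ) + 1) ((k : ℕ) - (j : ℕ)) /
        (Real.sqrt (τ ((k : ℕ) + 1)) * Real.sqrt (τ ((j : ℕ) + 1))) := by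
  simp only [Cm, Matrix.of_apply, if_pos h]

lemma Cm_apply_neg (τ r : ℕ → ℝ) (n : ℕ) (k j : Fin n) (h : ¬ ((j : ℕ) ≤ (k : ℕ))) :
    Cm τ r n k j = 0 := by
  simp only [Cm, Matrix.of_apply, if_neg h]

lemma offdiag_cancel (R sR stk stj T : ℝ) (hsR : sR ≠ 0) (hsq : sR * sR = R)
    (h1 : 1 + R ≠ 0) (h2 : 1 + 2*R ≠ 0) (hstk : stk ≠ 0) (hstj : stj ≠ 0) :
    -(R * sR)/(1+R) * (T/(stk*stj)) + (1+2*R)/(1+R) * ((R^2/(1+2*R)) * T/((sR*stk)*stj)) = 0 := by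
  subst hsq
  field_simp
  ring

lemma diag_value (τ1 R : ℝ) (hτ : τ1 ≠ 0) (h1 : 1 + R ≠ 0) (h2 : 1 + 2*R ≠ 0) :
    (1 + 2*R)/(1+R) * ((1 / ((1 + 2*R)/(τ1 * (1+R)))) / τ1) = 1 := by
  rw [one_div_div]
  field_simp

lemma Bt2_mul_Cm (τ r : ℕ → ℝ) (n : ℕ)
    (hτ : ∀ j, 1 ≤ j → j ≤ n → 0 < τ j)
    (hr1 : r 1 = 0)
    (hrpos : ∀ j, 2 ≤ j → j ≤ n → 0 < r j)
    (hrr : ∀ j, 2 ≤ j → j ≤ n → r j = τ j / τ (j - 1)) :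
    Bt2 r n * Cm τ r n = 1 := by
  ext k j
  rw [Matrix.mul_apply]
  rcases Nat.eq_zero_or_eq_succ_pred (k : ℕ) with hk0 | hksucc
  · -- first row
    rw [Finset.sum_eq_single_of_mem k (Finset.mem_univ k)]
    · have hr1' : r ((k:ℕ) + 1) = 0 := by rw [hk0]; exact hr1
      have hBkk : Bt2 r n k k = 1 := by
        simp [Bt2, hr1']
      rw [hBkk, one_mul]
      by_cases hjk : j = k
      · subst hjk
        have hτ1 : 0 < τ ((j:ℕ)+1) := hτ _ (by omega) (by omega)
        have hCjj : Cm τ r n j j = 1 := by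
          rw [Cm_apply_pos τ r n j j (le_refl _), Nat.sub_self, th_zero]
          have hbk : bk τ r ((j:ℕ)+1) 0 = (1 + 2 * r ((j:ℕ)+1)) / (τ ((j:ℕ)+1) * (1 + r ((j:ℕ)+1))) := by
            simp [bk]
          rw [hbk, Real.mul_self_sqrt (le_of_lt hτ1), hk0, hr1]
          rw [one_div_div]
          have hn1 : 1 ≤ n := j.pos
          norm_num
          exact ne_of_gt (hτ 1 (le_refl 1) hn1)
        rw [hCjj, Matrix.one_apply_eq]
      · have hj : ¬ ((j:ℕ) ≤ (k:ℕ)) := by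
          rw [hk0]
          intro h
          exact hjk (Fin.ext (by omega))
        rw [Cm_apply_neg τ r n k j hj, Matrix.one_apply_ne (fun h => hjk h.symm)]
    · intro l _ hlk
      have hB0 : Bt2 r n k l = 0 := by
        have h1 : ¬ ((k:ℕ) = (l:ℕ)) := fun h => (hlk (Fin.ext h.symm)).elim
        have h2 : ¬ ((l:ℕ) + 1 = (k:ℕ)) := by omega
        simp [Bt2, h1, h2]
      rw [hB0, zero_mul]
  · -- rows ≥ 1
    obtain ⟨k', hk'⟩ : ∃ k' : ℕ, (k:ℕ) = k' + 1 := ⟨(k:ℕ).pred, hksucc⟩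
    have hk'n : k' + 1 < n := by rw [← hk']; exact k.isLt
    set km : Fin n := ⟨k', by omega⟩ with hkm
    have hkmval : (km : ℕ) = k' := rfl
    have hkmk : km ≠ k := by
      intro h
      have : (km:ℕ) = (k:ℕ) := by rw [h]
      omega
    have hsum : ∑ l, Bt2 r n k l * Cm τ r n l j
        = ∑ l ∈ ({km, k} : Finset (Fin n)), Bt2 r n k l * Cm τ r n l j := by
      refine (Finset.sum_subset (Finset.subset_univ _) ?_).symm
      intro l _ hl
      simp only [Finset.mem_insert, Finset.mem_singleton] at hl
      push_neg at hl
      have h1 : ¬ ((k:ℕ) = (l:ℕ)) := by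
        intro h; exact hl.2 (Fin.ext h.symm)
      have h2 : ¬ ((l:ℕ) + 1 = (k:ℕ)) := by
        intro h
        apply hl.1
        apply Fin.ext
        omega
      simp [Bt2, h1, h2]
    rw [hsum, Finset.sum_pair hkmk]
    have hBkkm : Bt2 r n k km = -(r ((k:ℕ) + 1) * Real.sqrt (r ((k:ℕ) + 1))) / (1 + r ((k:ℕ) + 1)) := by
      have h1 : ¬ ((k:ℕ) = (km:ℕ)) := by omega
      have h2 : (km:ℕ) + 1 = (k:ℕ) := by omega
      simp [Bt2, h1, h2]
    have hBkk : Bt2 r n k k = (1 + 2 * r ((k:ℕ) + 1)) / (1 + r ((k:ℕ) + 1)) := by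
      simp [Bt2]
    have hk1n : (k:ℕ) + 1 ≤ n := by omega
    have hk12 : 2 ≤ (k:ℕ) + 1 := by omega
    have hRpos : 0 < r ((k:ℕ)+1) := hrpos _ hk12 hk1n
    have hτk1 : 0 < τ ((k:ℕ)+1) := hτ _ (by omega) hk1n
    have hτk : 0 < τ (k:ℕ) := hτ _ (by omega) (by omega)
    have h1R : (0:ℝ) < 1 + r ((k:ℕ)+1) := by linarith
    have h12R : (0:ℝ) < 1 + 2 * r ((k:ℕ)+1) := by linarith
    by_cases hjk : (j:ℕ) ≤ k'
    · -- strictly below diagonal : the two terms cancel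
      have hjk1 : (j:ℕ) ≤ (k:ℕ) := by omega
      have hCkj := Cm_apply_pos τ r n k j hjk1
      have hCkmj := Cm_apply_pos τ r n km j (by omega)
      rw [hkmval] at hCkmj
      -- column recurrence
      have hcol := th_col τ r (k'+1)
        (by rw [← hk']; exact ne_of_gt hτk1)
        (by rw [← hk']; exact ne_of_gt h1R)
        (by rw [← hk']; exact ne_of_gt h12R)
        (k' - (j:ℕ)) (by omega)
      have hidx : (k:ℕ) - (j:ℕ) = (k' - (j:ℕ)) + 1 := by omega
      have hidx2 : k' + 1 + 1 = (k:ℕ) + 1 := by omega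
      rw [hidx2] at hcol
      rw [hCkj, hCkmj, hBkkm, hBkk, hidx, hcol]
      have hτrel : τ ((k:ℕ)+1) = r ((k:ℕ)+1) * τ (k:ℕ) := by
        have h := hrr ((k:ℕ)+1) hk12 hk1n
        rw [h]
        have he : ((k:ℕ) + 1 - 1) = (k:ℕ) := by omega
        rw [he]
        field_simp
      have hsplit : Real.sqrt (τ ((k:ℕ)+1)) = Real.sqrt (r ((k:ℕ)+1)) * Real.sqrt (τ (k:ℕ)) := by
        rw [hτrel, Real.sqrt_mul (le_of_lt hRpos)]
      have hkk' : k' + 1 = (k:ℕ) := hk'.symm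
      rw [hkk', hsplit]
      have honeapply : (1 : Matrix (Fin n) (Fin n) ℝ) k j = 0 := by
        apply Matrix.one_apply_ne
        intro h
        rw [← h] at hjk
        omega
      rw [honeapply]
      exact offdiag_cancel (r ((k:ℕ)+1)) (Real.sqrt (r ((k:ℕ)+1)))
        (Real.sqrt (τ (k:ℕ))) (Real.sqrt (τ ((j:ℕ)+1)))
        (th τ r (k:ℕ) (k' - (j:ℕ)))
        (ne_of_gt (Real.sqrt_pos.mpr hRpos))
        (Real.mul_self_sqrt (le_of_lt hRpos))
        (ne_of_gt h1R) (ne_of_gt h12R)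
        (ne_of_gt (Real.sqrt_pos.mpr hτk))
        (ne_of_gt (Real.sqrt_pos.mpr (hτ _ (by omega) (by omega))))
    · by_cases hjk2 : j = k
      · -- diagonal entry
        subst hjk2
        have hCkmj : Cm τ r n km j = 0 := by
          apply Cm_apply_neg
          omega
        have hCjj := Cm_apply_pos τ r n j j (le_refl _)
        rw [Nat.sub_self, th_zero] at hCjj
        have hbk : bk τ r ((j:ℕ)+1) 0 = (1 + 2 * r ((j:ℕ)+1)) / (τ ((j:ℕ)+1) * (1 + r ((j:ℕ)+1))) := by
          simp [bk]
        rw [hbk, Real.mul_self_sqrt (le_of_lt hτk1)] at hCjj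
        rw [hCkmj, hCjj, hBkk, mul_zero, zero_add, Matrix.one_apply_eq]
        exact diag_value (τ ((j:ℕ)+1)) (r ((j:ℕ)+1)) (ne_of_gt hτk1) (ne_of_gt h1R) (ne_of_gt h12R)
      · -- above diagonal : everything vanishes
        have hj1 : ¬ ((j:ℕ) ≤ (k:ℕ)) := by
          intro h
          rcases eq_or_lt_of_le h with h' | h'
          · exact hjk2 (Fin.ext h')
          · omega
        rw [Cm_apply_neg τ r n k j hj1, Cm_apply_neg τ r n km j (by omega),
          mul_zero, mul_zero, add_zero, Matrix.one_apply_ne]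
        intro h
        exact hjk2 h.symm

end Aux2
section Aux3

set_option maxHeartbeats 1000000

lemma sum_Icc_one (n : ℕ) (f : ℕ → ℝ) :
    ∑ k ∈ Icc 1 n, f k = ∑ k ∈ range n, f (k+1) := by
  induction n with
  | zero => simp
  | succ n ih =>
    rw [Finset.sum_Icc_succ_top (by omega), ih, Finset.sum_range_succ]

lemma sum_Icc_fin (n : ℕ) (f : ℕ → ℝ) :
    ∑ k ∈ Icc 1 n, f k = ∑ k : Fin n, f ((k:ℕ)+1) := by
  rw [sum_Icc_one, ← Fin.sum_univ_eq_sum_range (fun k => f (k+1)) n]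

/-- reindexing the triangular double sums to `Fin n` with an indicator -/
lemma sum_pairs (n : ℕ) (F : ℕ → ℕ → ℝ) :
    ∑ k ∈ Icc 1 n, ∑ j ∈ Icc 1 k, F k j
      = ∑ k : Fin n, ∑ j : Fin n, if (j:ℕ) ≤ (k:ℕ) then F ((k:ℕ)+1) ((j:ℕ)+1) else 0 := by
  rw [sum_Icc_fin n (fun k => ∑ j ∈ Icc 1 k, F k j)]
  apply Finset.sum_congr rfl
  intro k _
  rw [sum_Icc_one ((k:ℕ)+1) (fun j => F ((k:ℕ)+1) j)]
  rw [Fin.sum_univ_eq_sum_range (fun j => if j ≤ (k:ℕ) then F ((k:ℕ)+1) (j+1) else 0) n]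
  rw [← Finset.sum_filter]
  apply Finset.sum_congr
  · ext a
    simp only [Finset.mem_filter, Finset.mem_range, Nat.lt_succ_iff]
    constructor
    · intro h; exact ⟨lt_of_le_of_lt h k.isLt, h⟩
    · intro h; exact h.2
  · intro a _; rfl

/-- a symmetric strictly diagonally dominant real matrix is positive definite -/
lemma posdef_of_dominant {n : ℕ} (A : Matrix (Fin n) (Fin n) ℝ) (hsym : Aᵀ = A)
    (hdom : ∀ k, (∑ j, if j = k then 0 else |A k j|) < A k k) : A.PosDef := by
  have hsym' : ∀ k j, A j k = A k j := by
    intro k j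
    exact (Matrix.transpose_apply A k j).symm.trans (congrFun (congrFun hsym k) j)
  have hherm : A.IsHermitian := by
    ext i j
    rw [Matrix.conjTranspose_apply, star_trivial]
    exact hsym' i j
  refine Matrix.PosDef.of_dotProduct_mulVec_pos hherm ?_
  intro x hx
  have hstar : star x = x := by ext i; simp
  rw [hstar]
  have hform : x ⬝ᵥ (A *ᵥ x) = ∑ k, ∑ j, x k * A k j * x j := by
    simp only [dotProduct, Matrix.mulVec, Finset.mul_sum]
    exact Finset.sum_congr rfl fun k _ => Finset.sum_congr rfl fun j _ => by ring
  have hsplitrow : ∀ k : Fin n, (∑ j, x k * A k j * x j)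
      = A k k * x k ^ 2 + ∑ j, (if j = k then 0 else x k * A k j * x j) := by
    intro k
    have h1 : (∑ j, x k * A k j * x j)
        = ∑ j, ((if j = k then x k * A k j * x j else 0) + (if j = k then 0 else x k * A k j * x j)) := by
      apply Finset.sum_congr rfl
      intro j _
      by_cases h : j = k <;> simp [h]
    rw [h1, Finset.sum_add_distrib, Finset.sum_ite_eq' Finset.univ k]
    simp only [Finset.mem_univ, if_true]
    congr 1
    ring
  have hA1 : x ⬝ᵥ (A *ᵥ x) = (∑ k, A k k * x k ^ 2)
      + ∑ k, ∑ j, (if j = k then 0 else x k * A k j * x j) := by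
    rw [hform, ← Finset.sum_add_distrib]
    exact Finset.sum_congr rfl fun k _ => hsplitrow k
  have hcross : ∀ k j : Fin n,
      (if j = k then 0 else -(|A k j| * x k ^ 2 / 2) - |A k j| * x j ^ 2 / 2)
      ≤ (if j = k then 0 else x k * A k j * x j) := by
    intro k j
    by_cases h : j = k
    · simp [h]
    · simp only [h, if_false]
      have habs : |x k * A k j * x j| ≤ |A k j| * x k ^2 / 2 + |A k j| * x j ^2 / 2 := by
        rw [abs_mul, abs_mul]
        nlinarith [abs_nonneg (A k j), abs_nonneg (x k), abs_nonneg (x j),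
          sq_abs (x k), sq_abs (x j),
          mul_nonneg (abs_nonneg (A k j)) (sq_nonneg (|x k| - |x j|))]
      have hneg := neg_abs_le (x k * A k j * x j)
      linarith
  have hB : (∑ k, ∑ j, (if j = k then 0 else -(|A k j| * x k ^ 2 / 2) - |A k j| * x j ^ 2 / 2))
      ≤ ∑ k, ∑ j, (if j = k then 0 else x k * A k j * x j) :=
    Finset.sum_le_sum fun k _ => Finset.sum_le_sum fun j _ => hcross k j
  have hCsplit : (∑ k, ∑ j, (if j = k then 0 else -(|A k j| * x k ^ 2 / 2) - |A k j| * x j ^ 2 / 2))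
      = -(∑ k, ∑ j, (if j = k then 0 else |A k j| * x k ^ 2 / 2))
        - ∑ k, ∑ j, (if j = k then 0 else |A k j| * x j ^ 2 / 2) := by
    have e : ∀ k j : Fin n, (if j = k then (0:ℝ) else -(|A k j| * x k ^ 2 / 2) - |A k j| * x j ^ 2 / 2)
        = -(if j = k then 0 else |A k j| * x k ^ 2 / 2) - (if j = k then 0 else |A k j| * x j ^ 2 / 2) := by
      intro k j
      by_cases h : j = k <;> simp [h]
    calc (∑ k, ∑ j, (if j = k then (0:ℝ) else -(|A k j| * x k ^ 2 / 2) - |A k j| * x j ^ 2 / 2))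
        = ∑ k, ∑ j, (-(if j = k then (0:ℝ) else |A k j| * x k ^ 2 / 2)
            - (if j = k then 0 else |A k j| * x j ^ 2 / 2)) := by
          exact Finset.sum_congr rfl fun k _ => Finset.sum_congr rfl fun j _ => e k j
      _ = -(∑ k, ∑ j, (if j = k then 0 else |A k j| * x k ^ 2 / 2))
          - ∑ k, ∑ j, (if j = k then 0 else |A k j| * x j ^ 2 / 2) := by
          simp only [Finset.sum_sub_distrib, Finset.sum_neg_distrib]
  have hswap : (∑ k, ∑ j, (if j = k then 0 else |A k j| * x j ^ 2 / 2))
      = ∑ k, ∑ j, (if j = k then 0 else |A k j| * x k ^ 2 / 2) := by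
    rw [Finset.sum_comm]
    apply Finset.sum_congr rfl
    intro k _
    apply Finset.sum_congr rfl
    intro j _
    by_cases h : j = k
    · subst h; simp
    · have h' : ¬ (k = j) := fun hh => h hh.symm
      simp only [h, h', if_false]
      rw [hsym' k j]
  have hD : (∑ k, ∑ j, (if j = k then 0 else |A k j| * x k ^ 2 / 2))
      = ∑ k, (∑ j, if j = k then 0 else |A k j|) * (x k ^ 2 / 2) := by
    apply Finset.sum_congr rfl
    intro k _
    rw [Finset.sum_mul]
    apply Finset.sum_congr rfl
    intro j _
    by_cases h : j = k <;> simp [h, mul_div_assoc]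
  have hlower : (∑ k, (A k k - ∑ j, if j = k then 0 else |A k j|) * x k ^ 2)
      ≤ x ⬝ᵥ (A *ᵥ x) := by
    rw [hA1]
    have e1 : (∑ k, (A k k - ∑ j, if j = k then 0 else |A k j|) * x k ^ 2)
        = (∑ k, A k k * x k ^ 2)
          - 2 * ∑ k, (∑ j, if j = k then 0 else |A k j|) * (x k ^ 2 / 2) := by
      rw [Finset.mul_sum, ← Finset.sum_sub_distrib]
      exact Finset.sum_congr rfl fun k _ => by ring
    rw [e1]
    have := hB
    rw [hCsplit, hswap, hD] at this
    linarith
  have hpos : 0 < ∑ k, (A k k - ∑ j, if j = k then 0 else |A k j|) * x k ^ 2 := by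
    obtain ⟨i₀, hi₀⟩ := Function.ne_iff.mp hx
    apply Finset.sum_pos'
    · intro k _
      have := hdom k
      have : (0:ℝ) ≤ (A k k - ∑ j, if j = k then 0 else |A k j|) := by linarith
      positivity
    · refine ⟨i₀, Finset.mem_univ _, ?_⟩
      have h1 : (0:ℝ) < A i₀ i₀ - ∑ j, (if j = i₀ then 0 else |A i₀ j|) := by
        have := hdom i₀
        linarith
      have h2 : (0:ℝ) < x i₀ ^ 2 := by
        have : x i₀ ≠ 0 := by simpa using hi₀
        positivity
      exact mul_pos h1 h2
  calc (0:ℝ) < _ := hpos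
    _ ≤ x ⬝ᵥ (A *ᵥ x) := hlower

end Aux3
section Aux4

set_option maxHeartbeats 1000000

lemma quadform_decomp {n : ℕ} (A : Matrix (Fin n) (Fin n) ℝ) (hA : A.IsHermitian) (x : Fin n → ℝ) :
    x ⬝ᵥ (A *ᵥ x) = ∑ i, hA.eigenvalues i *
      ((star (hA.eigenvectorUnitary : Matrix (Fin n) (Fin n) ℝ) *ᵥ x) i)^2 := by
  set U : Matrix (Fin n) (Fin n) ℝ := (hA.eigenvectorUnitary : Matrix (Fin n) (Fin n) ℝ) with hUdef
  have hsU : star U = Uᵀ := by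
    rw [Matrix.star_eq_conjTranspose]; ext i j; simp [Matrix.conjTranspose_apply]
  set y : Fin n → ℝ := star U *ᵥ x with hy
  conv_lhs => rw [hA.spectral_theorem, Unitary.conjStarAlgAut_apply, ← hUdef]
  rw [← Matrix.mulVec_mulVec, ← Matrix.mulVec_mulVec, Matrix.dotProduct_mulVec x U,
    ← Matrix.mulVec_transpose, ← hsU, ← hy]
  rw [show (Matrix.diagonal (RCLike.ofReal ∘ hA.eigenvalues) : Matrix (Fin n) (Fin n) ℝ)
      = Matrix.diagonal hA.eigenvalues from by
    ext i j; by_cases h : i = j <;> simp [Matrix.diagonal, h]]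
  simp only [dotProduct, Matrix.mulVec_diagonal]
  exact Finset.sum_congr rfl fun i _ => by ring

lemma norm_decomp {n : ℕ} (A : Matrix (Fin n) (Fin n) ℝ) (hA : A.IsHermitian) (x : Fin n → ℝ) :
    x ⬝ᵥ x = ∑ i, ((star (hA.eigenvectorUnitary : Matrix (Fin n) (Fin n) ℝ) *ᵥ x) i)^2 := by
  set U : Matrix (Fin n) (Fin n) ℝ := (hA.eigenvectorUnitary : Matrix (Fin n) (Fin n) ℝ) with hUdef
  have hU : U * star U = 1 := Matrix.mem_unitaryGroup_iff.mp hA.eigenvectorUnitary.2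
  have hsU : star U = Uᵀ := by
    rw [Matrix.star_eq_conjTranspose]; ext i j; simp [Matrix.conjTranspose_apply]
  have h2 : ∑ i, ((star U *ᵥ x) i)^2 = (star U *ᵥ x) ⬝ᵥ (star U *ᵥ x) := by
    simp only [dotProduct]
    exact Finset.sum_congr rfl fun i _ => by ring
  rw [h2, hsU, Matrix.mulVec_transpose, ← Matrix.dotProduct_mulVec,
    ← Matrix.mulVec_transpose U x, Matrix.mulVec_mulVec, ← hsU, hU, Matrix.one_mulVec]

lemma rayleigh_min {n : ℕ} (A : Matrix (Fin n) (Fin n) ℝ) (hA : A.IsHermitian) (x : Fin n → ℝ) :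
    lamMin A * (x ⬝ᵥ x) ≤ x ⬝ᵥ (A *ᵥ x) := by
  rw [quadform_decomp A hA x, norm_decomp A hA x, Finset.mul_sum]
  apply Finset.sum_le_sum
  intro i _
  have h1 : lamMin A ≤ hA.eigenvalues i := by
    rw [lamMin, dif_pos hA]
    exact ciInf_le (Set.Finite.bddBelow (Set.finite_range _)) i
  exact mul_le_mul_of_nonneg_right h1 (sq_nonneg _)

lemma rayleigh_max {n : ℕ} (A : Matrix (Fin n) (Fin n) ℝ) (hA : A.IsHermitian) (x : Fin n → ℝ) :
    x ⬝ᵥ (A *ᵥ x) ≤ lamMax A * (x ⬝ᵥ x) := by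
  rw [quadform_decomp A hA x, norm_decomp A hA x, Finset.mul_sum]
  apply Finset.sum_le_sum
  intro i _
  have h1 : hA.eigenvalues i ≤ lamMax A := by
    rw [lamMax, dif_pos hA]
    exact le_ciSup (Set.Finite.bddAbove (Set.finite_range _)) i
  exact mul_le_mul_of_nonneg_right h1 (sq_nonneg _)

lemma lamMin_pos {n : ℕ} (hn : 0 < n) (A : Matrix (Fin n) (Fin n) ℝ) (hPD : A.PosDef) :
    0 < lamMin A := by
  have hA : A.IsHermitian := hPD.1
  rw [lamMin, dif_pos hA]
  haveI : Nonempty (Fin n) := ⟨⟨0, hn⟩⟩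
  obtain ⟨i₀, _, hi₀⟩ := Finset.exists_min_image Finset.univ hA.eigenvalues ⟨⟨0, hn⟩, Finset.mem_univ _⟩
  calc (0:ℝ) < hA.eigenvalues i₀ := hPD.eigenvalues_pos i₀
    _ ≤ ⨅ i, hA.eigenvalues i := le_ciInf fun j => hi₀ j (Finset.mem_univ _)

end Aux4
section Aux5

set_option maxHeartbeats 1000000

lemma young_ineq (c a b : ℝ) (hc : 0 < c) : a*b ≤ c*a^2 + b^2/(4*c) := by
  have h4c : (0:ℝ) < 4*c := by linarith
  have h1 : 0 ≤ (2*c*a - b)^2 / (4*c) := div_nonneg (sq_nonneg _) (le_of_lt h4c)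
  have h2 : (2*c*a - b)^2 / (4*c) = c*a^2 - a*b + b^2/(4*c) := by
    field_simp
    ring
  linarith [h2 ▸ h1]

lemma sum_indicator_le {n : ℕ} (c : ℝ) (hc : 0 ≤ c) (p : Fin n → Prop) [DecidablePred p]
    (huniq : ∀ a b, p a → p b → a = b) : (∑ j, if p j then c else 0) ≤ c := by
  by_cases h : ∃ a, p a
  · obtain ⟨a, ha⟩ := h
    rw [Finset.sum_eq_single_of_mem a (Finset.mem_univ a)]
    · rw [if_pos ha]
    · intro b _ hba
      rw [if_neg (fun hb => hba (huniq b a hb ha))]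
  · push_neg at h
    rw [Finset.sum_eq_zero (fun b _ => if_neg (h b))]
    exact hc

lemma sqrt_le_two (R : ℝ) (h4 : R ≤ 4) : Real.sqrt R ≤ 2 := by
  rw [show (2:ℝ) = Real.sqrt 4 from by
    rw [show (4:ℝ) = 2^2 by norm_num, Real.sqrt_sq (by norm_num)]]
  exact Real.sqrt_le_sqrt h4

lemma e_lt_two (R : ℝ) (h0 : 0 ≤ R) (h4 : R < 4) : R * Real.sqrt R / (1+R) < 2 := by
  have h1R : (0:ℝ) < 1 + R := by linarith
  rw [div_lt_iff₀ h1R]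
  have hs : Real.sqrt R ≤ 2 := sqrt_le_two R (le_of_lt h4)
  nlinarith [Real.sqrt_nonneg R]

lemma e_le_2d2 (R : ℝ) (h0 : 0 ≤ R) (h4 : R < 4) :
    R * Real.sqrt R / (1+R) ≤ 2*((1+2*R)/(1+R)) - 2 := by
  have h1R : (0:ℝ) < 1 + R := by linarith
  have he : 2*((1+2*R)/(1+R)) - 2 = 2*R/(1+R) := by field_simp; ring
  rw [he, div_le_div_iff₀ h1R h1R]
  have hs : Real.sqrt R ≤ 2 := sqrt_le_two R (le_of_lt h4)
  nlinarith [Real.sqrt_nonneg R, mul_le_mul_of_nonneg_left hs h0]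

end Aux5
set_option maxHeartbeats 4000000 in
theorem stmt10 (N : ℕ) (τ r : ℕ → ℝ)
    (hτ : ∀ k, 1 ≤ k → k ≤ N → 0 < τ k)
    (hr1 : r 1 = 0)
    (hr : ∀ k, 2 ≤ k → k ≤ N → r k = τ k / τ (k - 1))
    (hratio : ∀ k, 2 ≤ k → k ≤ N → 0 < r k ∧ r k < (3 + Real.sqrt 17) / 2)
    (n : ℕ) (hn2 : 2 ≤ n) (hnN : n + 1 ≤ N)
    (Mr : ℝ)
    (hMr : Mr = (Finset.Icc 1 n).sup' (Finset.nonempty_Icc.mpr (le_trans one_le_two hn2)) (Mrq r))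
    (v z w : ℕ → Fin 2 → ℝ) :
    (∀ ε : ℝ, 0 < ε →
      ∑ k ∈ Finset.Icc 1 n, ∑ j ∈ Finset.Icc 1 k,
          th τ r k (k - j) * ∑ i, z k i * (fvec (v j + w j) i - fvec (v j) i)
        ≤ ∑ k ∈ Finset.Icc 1 n, ∑ j ∈ Finset.Icc 1 k,
            th τ r k (k - j) *
              (ε * ∑ i, z k i * z j i + (Mr / ε) * ∑ i, w k i * w j i)) ∧
    ∑ k ∈ Finset.Icc 1 n, ∑ j ∈ Finset.Icc 1 k,
        th τ r k (k - j) * ∑ i, z k i * (fvec (v j + z j) i - fvec (v j) i)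
      ≤ 2 * Real.sqrt Mr * ∑ k ∈ Finset.Icc 1 n, ∑ j ∈ Finset.Icc 1 k,
          th τ r k (k - j) * ∑ i, z k i * z j i := by
  have hn1 : 1 ≤ n := le_trans one_le_two hn2
  have hτn : ∀ j, 1 ≤ j → j ≤ n → 0 < τ j := fun j h1 h2 => hτ j h1 (by omega)
  have hrposn : ∀ j, 2 ≤ j → j ≤ n → 0 < r j := fun j h1 h2 => (hratio j h1 (by omega)).1
  have hrrn : ∀ j, 2 ≤ j → j ≤ n → r j = τ j / τ (j-1) := fun j h1 h2 => hr j h1 (by omega)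
  have hr4 : ∀ m, 1 ≤ m → m ≤ N → 0 ≤ r m ∧ r m < 4 := by
    intro m h1 h2
    rcases eq_or_lt_of_le h1 with h | h
    · exact ⟨le_of_eq (by rw [← h, hr1]), by rw [← h, hr1]; norm_num⟩
    · have h17 : Real.sqrt 17 < 5 := by
        rw [show (5:ℝ) = Real.sqrt 25 from by
          rw [show (25:ℝ) = 5^2 by norm_num, Real.sqrt_sq (by norm_num)]]
        exact Real.sqrt_lt_sqrt (by norm_num) (by norm_num)
      obtain ⟨hp, hb⟩ := hratio m h h2
      exact ⟨le_of_lt hp, lt_trans hb (by linarith)⟩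
  -- matrices
  set A := Bt2 r n with hAdef
  set C := Cm τ r n with hCdef
  have hAC : A * C = 1 := Bt2_mul_Cm τ r n hτn hr1 hrposn hrrn
  have hCA : C * A = 1 := mul_eq_one_comm.mp hAC
  have hAp : ∀ x : Fin n → ℝ, A *ᵥ (C *ᵥ x) = x := fun x => by
    rw [Matrix.mulVec_mulVec, hAC, Matrix.one_mulVec]
  set Bs := A + Aᵀ with hBsdef
  have hBsym : Bsᵀ = Bs := by
    rw [hBsdef, Matrix.transpose_add, Matrix.transpose_transpose, add_comm]
  -- diagonal dominance of Bs
  have hdom : ∀ k : Fin n, (∑ j, if j = k then 0 else |Bs k j|) < Bs k k := by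
    intro k
    have hkn := k.isLt
    obtain ⟨hR0, hR4⟩ := hr4 ((k:ℕ)+1) (by omega) (by omega)
    obtain ⟨hR0', hR4'⟩ := hr4 ((k:ℕ)+2) (by omega) (by omega)
    have h1R : (0:ℝ) < 1 + r ((k:ℕ)+1) := by linarith
    have h1R' : (0:ℝ) < 1 + r ((k:ℕ)+2) := by linarith
    have he1 : (0:ℝ) ≤ r ((k:ℕ)+1) * Real.sqrt (r ((k:ℕ)+1)) / (1 + r ((k:ℕ)+1)) := by positivity
    have he2 : (0:ℝ) ≤ r ((k:ℕ)+2) * Real.sqrt (r ((k:ℕ)+2)) / (1 + r ((k:ℕ)+2)) := by positivity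
    have hBkk : Bs k k = 2*((1 + 2*r ((k:ℕ)+1))/(1 + r ((k:ℕ)+1))) := by
      simp [hBsdef, Matrix.add_apply, Matrix.transpose_apply, hAdef, Bt2]
      ring
    have hb : ∀ j : Fin n, (if j = k then (0:ℝ) else |Bs k j|)
        ≤ (if (j:ℕ)+1 = (k:ℕ) then r ((k:ℕ)+1) * Real.sqrt (r ((k:ℕ)+1))/(1 + r ((k:ℕ)+1)) else 0)
          + (if (k:ℕ)+1 = (j:ℕ) then r ((k:ℕ)+2) * Real.sqrt (r ((k:ℕ)+2))/(1 + r ((k:ℕ)+2)) else 0) := by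
      intro j
      by_cases hjk : j = k
      · subst hjk
        rw [if_pos rfl, if_neg (by omega), if_neg (by omega)]
        norm_num
      · rw [if_neg hjk]
        have hkj : ¬ ((k:ℕ) = (j:ℕ)) := fun h => hjk (Fin.ext h.symm)
        have hjkn : ¬ ((j:ℕ) = (k:ℕ)) := fun h => hjk (Fin.ext h)
        by_cases h1 : (j:ℕ)+1 = (k:ℕ)
        · have hAkj : A k j = -(r ((k:ℕ)+1) * Real.sqrt (r ((k:ℕ)+1))) / (1 + r ((k:ℕ)+1)) := by
            simp [hAdef, Bt2, hkj, h1]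
          have hAjk : A j k = 0 := by
            have c1 : ¬ ((j:ℕ) = (k:ℕ)) := hjkn
            have c2 : ¬ ((k:ℕ)+1 = (j:ℕ)) := by omega
            simp [hAdef, Bt2, c1, c2]
          have hBkj : Bs k j = -(r ((k:ℕ)+1) * Real.sqrt (r ((k:ℕ)+1))) / (1 + r ((k:ℕ)+1)) := by
            simp [hBsdef, Matrix.add_apply, Matrix.transpose_apply, hAkj, hAjk]
          rw [hBkj, if_pos h1, if_neg (by omega), neg_div, abs_neg,
            abs_of_nonneg (by positivity)]
          simp
        · by_cases h2 : (k:ℕ)+1 = (j:ℕ)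
          · have hAkj : A k j = 0 := by
              have c2 : ¬ ((j:ℕ)+1 = (k:ℕ)) := h1
              simp [hAdef, Bt2, hkj, c2]
            have hAjk : A j k = -(r ((j:ℕ)+1) * Real.sqrt (r ((j:ℕ)+1))) / (1 + r ((j:ℕ)+1)) := by
              have c1 : ¬ ((j:ℕ) = (k:ℕ)) := hjkn
              simp [hAdef, Bt2, c1, h2]
            have hj1 : (j:ℕ)+1 = (k:ℕ)+2 := by omega
            rw [hj1] at hAjk
            have hBkj : Bs k j = -(r ((k:ℕ)+2) * Real.sqrt (r ((k:ℕ)+2))) / (1 + r ((k:ℕ)+2)) := by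
              simp [hBsdef, Matrix.add_apply, Matrix.transpose_apply, hAkj, hAjk]
            rw [hBkj, if_neg h1, if_pos h2, neg_div, abs_neg,
              abs_of_nonneg (by positivity)]
            simp
          · have hAkj : A k j = 0 := by simp [hAdef, Bt2, hkj, h1]
            have hAjk : A j k = 0 := by
              have c2 : ¬ ((k:ℕ)+1 = (j:ℕ)) := h2
              simp [hAdef, Bt2, hjkn, c2]
            have hBkj : Bs k j = 0 := by
              simp [hBsdef, Matrix.add_apply, Matrix.transpose_apply, hAkj, hAjk]
            rw [hBkj, if_neg h1, if_neg h2, abs_zero]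
            norm_num
    have huniq1 : ∀ a b : Fin n, (a:ℕ)+1 = (k:ℕ) → (b:ℕ)+1 = (k:ℕ) → a = b :=
      fun a b ha hb => Fin.ext (by omega)
    have huniq2 : ∀ a b : Fin n, (k:ℕ)+1 = (a:ℕ) → (k:ℕ)+1 = (b:ℕ) → a = b :=
      fun a b ha hb => Fin.ext (by omega)
    calc (∑ j, if j = k then (0:ℝ) else |Bs k j|)
        ≤ ∑ j : Fin n,
            ((if (j:ℕ)+1 = (k:ℕ) then r ((k:ℕ)+1) * Real.sqrt (r ((k:ℕ)+1))/(1 + r ((k:ℕ)+1)) else 0)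
            + (if (k:ℕ)+1 = (j:ℕ) then r ((k:ℕ)+2) * Real.sqrt (r ((k:ℕ)+2))/(1 + r ((k:ℕ)+2)) else 0)) :=
          Finset.sum_le_sum (fun j _ => hb j)
      _ = (∑ j : Fin n, if (j:ℕ)+1 = (k:ℕ) then r ((k:ℕ)+1) * Real.sqrt (r ((k:ℕ)+1))/(1 + r ((k:ℕ)+1)) else 0)
          + (∑ j : Fin n, if (k:ℕ)+1 = (j:ℕ) then r ((k:ℕ)+2) * Real.sqrt (r ((k:ℕ)+2))/(1 + r ((k:ℕ)+2)) else 0) :=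
          Finset.sum_add_distrib
      _ ≤ r ((k:ℕ)+1) * Real.sqrt (r ((k:ℕ)+1))/(1 + r ((k:ℕ)+1))
          + r ((k:ℕ)+2) * Real.sqrt (r ((k:ℕ)+2))/(1 + r ((k:ℕ)+2)) :=
          add_le_add (sum_indicator_le _ he1 _ huniq1) (sum_indicator_le _ he2 _ huniq2)
      _ < 2*((1 + 2*r ((k:ℕ)+1))/(1 + r ((k:ℕ)+1))) := by
          have ha := e_le_2d2 (r ((k:ℕ)+1)) hR0 hR4
          have hc := e_lt_two (r ((k:ℕ)+2)) hR0' hR4'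
          linarith
      _ = Bs k k := hBkk.symm
  have hBsPD : Bs.PosDef := posdef_of_dominant Bs hBsym hdom
  have hBsHerm : Bs.IsHermitian := hBsPD.1
  have hlmin : 0 < lamMin Bs := lamMin_pos (by omega) Bs hBsPD
  have hConjT : ∀ (M : Matrix (Fin n) (Fin n) ℝ), Mᴴ = Mᵀ := fun M => by
    ext i j; simp [Matrix.conjTranspose_apply]
  have hGherm : (Aᵀ * A).IsHermitian := by
    show (Aᵀ*A)ᴴ = Aᵀ*A
    rw [hConjT, Matrix.transpose_mul, Matrix.transpose_transpose]
  have hdotself : ∀ (m : ℕ) (x : Fin m → ℝ), 0 ≤ x ⬝ᵥ x := fun m x =>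
    Finset.sum_nonneg (fun i _ => mul_self_nonneg _)
  have hGray : ∀ x : Fin n → ℝ, (A *ᵥ x) ⬝ᵥ (A *ᵥ x) ≤ lamMax (Aᵀ * A) * (x ⬝ᵥ x) := by
    intro x
    have h := rayleigh_max (Aᵀ*A) hGherm x
    have hid : x ⬝ᵥ ((Aᵀ*A) *ᵥ x) = (A *ᵥ x) ⬝ᵥ (A *ᵥ x) := by
      rw [← Matrix.mulVec_mulVec, Matrix.dotProduct_mulVec, Matrix.vecMul_transpose]
    rw [hid] at h
    exact h
  -- positivity of lamMax
  have hlmaxpos : 0 < lamMax (Aᵀ * A) := by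
    set i0 : Fin n := ⟨0, by omega⟩ with hi0
    set x : Fin n → ℝ := Pi.single i0 1 with hx
    have hxx : x ⬝ᵥ x = 1 := by
      simp [hx, dotProduct, Pi.single_apply]
    have hAx : (A *ᵥ x) ⬝ᵥ (A *ᵥ x) = ∑ k : Fin n, (A k i0) * (A k i0) := by
      apply Finset.sum_congr rfl
      intro k _
      simp [hx, Matrix.mulVec_single]
    have hA00 : A i0 i0 = 1 := by
      have : (i0:ℕ) = 0 := rfl
      simp [hAdef, Bt2, this, hr1]
    have hge : (1:ℝ) ≤ (A *ᵥ x) ⬝ᵥ (A *ᵥ x) := by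
      rw [hAx]
      calc (1:ℝ) = A i0 i0 * A i0 i0 := by rw [hA00]; norm_num
        _ ≤ ∑ k : Fin n, (A k i0) * (A k i0) :=
          Finset.single_le_sum (f := fun k => A k i0 * A k i0)
            (fun k _ => mul_self_nonneg _) (Finset.mem_univ i0)
    have h := hGray x
    rw [hxx, mul_one] at h
    linarith
  have hMrqval : Mrq r n = lamMax (Aᵀ * A) / (lamMin Bs)^2 := rfl
  have hMrq_le : Mrq r n ≤ Mr := by
    rw [hMr]
    exact Finset.le_sup' (Mrq r) (Finset.mem_Icc.mpr ⟨hn1, le_refl n⟩)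
  have hMrq_pos : 0 < Mrq r n := by
    rw [hMrqval]
    exact div_pos hlmaxpos (pow_pos hlmin 2)
  have hMr_pos : 0 < Mr := lt_of_lt_of_le hMrq_pos hMrq_le
  have hlmax0 : 0 ≤ lamMax (Aᵀ * A) := le_of_lt hlmaxpos
  -- scaled vectors
  set sv : (ℕ → Fin 2 → ℝ) → Fin 2 → Fin n → ℝ :=
    fun y i k => Real.sqrt (τ ((k:ℕ)+1)) * y ((k:ℕ)+1) i with hsv
  -- the bridge between the triangular sums and the matrix-vector forms
  have hbridge : ∀ a b : ℕ → Fin 2 → ℝ,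
      (∑ k ∈ Finset.Icc 1 n, ∑ j ∈ Finset.Icc 1 k, th τ r k (k-j) * (∑ i, a k i * b j i))
        = ∑ i : Fin 2, (sv a i) ⬝ᵥ (C *ᵥ (sv b i)) := by
    intro a b
    have hR : ∀ i : Fin 2, (sv a i) ⬝ᵥ (C *ᵥ (sv b i))
        = ∑ k : Fin n, ∑ j : Fin n, sv a i k * (C k j * sv b i j) := by
      intro i
      simp only [dotProduct, Matrix.mulVec, Finset.mul_sum]
    have hRHS : (∑ i : Fin 2, (sv a i) ⬝ᵥ (C *ᵥ (sv b i)))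
        = ∑ k : Fin n, ∑ j : Fin n, ∑ i : Fin 2, sv a i k * (C k j * sv b i j) := by
      calc (∑ i : Fin 2, (sv a i) ⬝ᵥ (C *ᵥ (sv b i)))
          = ∑ i : Fin 2, ∑ k : Fin n, ∑ j : Fin n, sv a i k * (C k j * sv b i j) :=
            Finset.sum_congr rfl (fun i _ => hR i)
        _ = ∑ k : Fin n, ∑ i : Fin 2, ∑ j : Fin n, sv a i k * (C k j * sv b i j) :=
            Finset.sum_comm
        _ = ∑ k : Fin n, ∑ j : Fin n, ∑ i : Fin 2, sv a i k * (C k j * sv b i j) :=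
            Finset.sum_congr rfl (fun k _ => Finset.sum_comm)
    rw [sum_pairs n (fun k j => th τ r k (k-j) * (∑ i, a k i * b j i)), hRHS]
    apply Finset.sum_congr rfl
    intro k _
    apply Finset.sum_congr rfl
    intro j _
    have hτk1 : 0 < τ ((k:ℕ)+1) := hτn _ (by omega) (by omega)
    have hτj1 : 0 < τ ((j:ℕ)+1) := hτn _ (by omega) (by omega)
    by_cases hjk : (j:ℕ) ≤ (k:ℕ)
    · rw [if_pos hjk]
      have hidx : ((k:ℕ)+1) - ((j:ℕ)+1) = (k:ℕ) - (j:ℕ) := by omega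
      rw [hidx]
      have hCkj : C k j = th τ r ((k:ℕ)+1) ((k:ℕ)-(j:ℕ)) /
          (Real.sqrt (τ ((k:ℕ)+1)) * Real.sqrt (τ ((j:ℕ)+1))) := Cm_apply_pos τ r n k j hjk
      rw [Finset.mul_sum]
      apply Finset.sum_congr rfl
      intro i _
      rw [hCkj]
      have h1 : Real.sqrt (τ ((k:ℕ)+1)) ≠ 0 := ne_of_gt (Real.sqrt_pos.mpr hτk1)
      have h2 : Real.sqrt (τ ((j:ℕ)+1)) ≠ 0 := ne_of_gt (Real.sqrt_pos.mpr hτj1)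
      simp only [hsv]
      field_simp
    · rw [if_neg hjk]
      have hCkj : C k j = 0 := Cm_apply_neg τ r n k j hjk
      rw [hCkj]
      simp
  -- quadratic form representations
  have hBs_quad : ∀ p : Fin n → ℝ, p ⬝ᵥ (Bs *ᵥ p) = 2 * (p ⬝ᵥ (A *ᵥ p)) := by
    intro p
    rw [hBsdef, Matrix.add_mulVec, dotProduct_add]
    have h1 : p ⬝ᵥ (Aᵀ *ᵥ p) = p ⬝ᵥ (A *ᵥ p) := by
      rw [Matrix.mulVec_transpose, dotProduct_comm, Matrix.dotProduct_mulVec]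
    rw [h1]
    ring
  have hQrepr : ∀ x : Fin n → ℝ, (C *ᵥ x) ⬝ᵥ (A *ᵥ (C *ᵥ x)) = x ⬝ᵥ (C *ᵥ x) := by
    intro x
    rw [hAp x, dotProduct_comm]
  have hQlower : ∀ x : Fin n → ℝ,
      (lamMin Bs/2) * ((C *ᵥ x) ⬝ᵥ (C *ᵥ x)) ≤ x ⬝ᵥ (C *ᵥ x) := by
    intro x
    have h := rayleigh_min Bs hBsHerm (C *ᵥ x)
    rw [hBs_quad, hQrepr] at h
    linarith
  have hQnn : ∀ x : Fin n → ℝ, 0 ≤ x ⬝ᵥ (C *ᵥ x) := by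
    intro x
    have h1 := hQlower x
    have h2 : 0 ≤ (lamMin Bs/2) * ((C *ᵥ x) ⬝ᵥ (C *ᵥ x)) :=
      mul_nonneg (by linarith) (hdotself n _)
    linarith
  have hWbound : ∀ x : Fin n → ℝ,
      x ⬝ᵥ x ≤ (2 * lamMax (Aᵀ * A) / lamMin Bs) * (x ⬝ᵥ (C *ᵥ x)) := by
    intro x
    have h1 : x ⬝ᵥ x = (A *ᵥ (C *ᵥ x)) ⬝ᵥ (A *ᵥ (C *ᵥ x)) := by rw [hAp]
    have h2 := hGray (C *ᵥ x)
    have h3 := hQlower x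
    have h4 : (C *ᵥ x) ⬝ᵥ (C *ᵥ x) ≤ (2/lamMin Bs) * (x ⬝ᵥ (C *ᵥ x)) := by
      have he : (2/lamMin Bs) * ((lamMin Bs/2) * ((C *ᵥ x) ⬝ᵥ (C *ᵥ x)))
          = (C *ᵥ x) ⬝ᵥ (C *ᵥ x) := by
        field_simp
      calc (C *ᵥ x) ⬝ᵥ (C *ᵥ x) = (2/lamMin Bs) * ((lamMin Bs/2) * ((C *ᵥ x) ⬝ᵥ (C *ᵥ x))) := he.symm
        _ ≤ (2/lamMin Bs) * (x ⬝ᵥ (C *ᵥ x)) :=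
            mul_le_mul_of_nonneg_left h3 (by positivity)
    calc x ⬝ᵥ x = (A *ᵥ (C *ᵥ x)) ⬝ᵥ (A *ᵥ (C *ᵥ x)) := h1
      _ ≤ lamMax (Aᵀ * A) * ((C *ᵥ x) ⬝ᵥ (C *ᵥ x)) := h2
      _ ≤ lamMax (Aᵀ * A) * ((2/lamMin Bs) * (x ⬝ᵥ (C *ᵥ x))) :=
          mul_le_mul_of_nonneg_left h4 hlmax0
      _ = (2 * lamMax (Aᵀ * A) / lamMin Bs) * (x ⬝ᵥ (C *ᵥ x)) := by ring
  -- master inequality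
  have master : ∀ ε : ℝ, 0 < ε → ∀ b : ℕ → Fin 2 → ℝ,
      (∑ i : Fin 2, (sv z i) ⬝ᵥ (C *ᵥ (sv b i)))
        ≤ ε * (∑ i : Fin 2, (sv z i) ⬝ᵥ (C *ᵥ (sv z i)))
          + (1/(2*ε*lamMin Bs)) * (∑ i : Fin 2, (sv b i) ⬝ᵥ (sv b i)) := by
    intro ε hε b
    have hstep : ∀ i : Fin 2, (sv z i) ⬝ᵥ (C *ᵥ (sv b i))
        ≤ ε * ((sv z i) ⬝ᵥ (C *ᵥ (sv z i))) + (1/(2*ε*lamMin Bs)) * ((sv b i) ⬝ᵥ (sv b i)) := by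
      intro i
      set x : Fin n → ℝ := sv z i with hxdef
      set y : Fin n → ℝ := sv b i with hydef
      set t : Fin n → ℝ := Cᵀ *ᵥ x with htdef
      have hid1 : x ⬝ᵥ (C *ᵥ y) = t ⬝ᵥ y := by
        rw [htdef, Matrix.mulVec_transpose]
        exact Matrix.dotProduct_mulVec x C y
      have hyoung : t ⬝ᵥ y ≤ (ε*lamMin Bs/2) * (t ⬝ᵥ t) + (1/(2*ε*lamMin Bs)) * (y ⬝ᵥ y) := by
        have hc : 0 < ε*lamMin Bs/2 := by positivity
        calc t ⬝ᵥ y = ∑ k : Fin n, t k * y k := rfl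
          _ ≤ ∑ k : Fin n, ((ε*lamMin Bs/2)*(t k)^2 + (y k)^2/(4*(ε*lamMin Bs/2))) :=
              Finset.sum_le_sum (fun k _ => young_ineq (ε*lamMin Bs/2) (t k) (y k) hc)
          _ = (ε*lamMin Bs/2) * (t ⬝ᵥ t) + (1/(2*ε*lamMin Bs)) * (y ⬝ᵥ y) := by
              rw [Finset.sum_add_distrib]
              simp only [dotProduct, Finset.mul_sum]
              congr 1
              · exact Finset.sum_congr rfl fun k _ => by ring
              · apply Finset.sum_congr rfl
                intro k _
                have hεl : ε * lamMin Bs ≠ 0 := by positivity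
                field_simp
                ring
      have e1 : t ⬝ᵥ (A *ᵥ t) = x ⬝ᵥ (C *ᵥ x) := by
        calc t ⬝ᵥ (A *ᵥ t)
            = (x ᵥ* C) ⬝ᵥ ((A * Cᵀ) *ᵥ x) := by
              rw [htdef, Matrix.mulVec_mulVec, Matrix.mulVec_transpose]
          _ = x ⬝ᵥ (C *ᵥ ((A * Cᵀ) *ᵥ x)) := (Matrix.dotProduct_mulVec _ _ _).symm
          _ = x ⬝ᵥ ((C * (A * Cᵀ)) *ᵥ x) := by rw [Matrix.mulVec_mulVec]
          _ = x ⬝ᵥ (Cᵀ *ᵥ x) := by rw [← mul_assoc, hCA, one_mul]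
          _ = (C *ᵥ x) ⬝ᵥ x := by rw [Matrix.dotProduct_mulVec, Matrix.vecMul_transpose]
          _ = x ⬝ᵥ (C *ᵥ x) := dotProduct_comm _ _
      have e2 : t ⬝ᵥ (Aᵀ *ᵥ t) = x ⬝ᵥ (C *ᵥ x) := by
        calc t ⬝ᵥ (Aᵀ *ᵥ t)
            = (A *ᵥ t) ⬝ᵥ t := by rw [Matrix.dotProduct_mulVec, Matrix.vecMul_transpose]
          _ = t ⬝ᵥ (A *ᵥ t) := dotProduct_comm _ _
          _ = x ⬝ᵥ (C *ᵥ x) := e1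
      have hid2 : t ⬝ᵥ (Bs *ᵥ t) = 2 * (x ⬝ᵥ (C *ᵥ x)) := by
        rw [hBsdef, Matrix.add_mulVec, dotProduct_add, e1, e2]
        ring
      have hray := rayleigh_min Bs hBsHerm t
      rw [hid2] at hray
      have h3' : (ε*lamMin Bs/2) * (t ⬝ᵥ t) ≤ ε * (x ⬝ᵥ (C *ᵥ x)) := by
        have hm := mul_le_mul_of_nonneg_left hray (by positivity : (0:ℝ) ≤ ε/2)
        calc (ε*lamMin Bs/2) * (t ⬝ᵥ t) = ε/2 * (lamMin Bs * (t ⬝ᵥ t)) := by ring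
          _ ≤ ε/2 * (2 * (x ⬝ᵥ (C *ᵥ x))) := hm
          _ = ε * (x ⬝ᵥ (C *ᵥ x)) := by ring
      rw [hid1]
      linarith [hyoung, h3']
    calc (∑ i : Fin 2, (sv z i) ⬝ᵥ (C *ᵥ (sv b i)))
        ≤ ∑ i : Fin 2, (ε * ((sv z i) ⬝ᵥ (C *ᵥ (sv z i)))
            + (1/(2*ε*lamMin Bs)) * ((sv b i) ⬝ᵥ (sv b i))) :=
          Finset.sum_le_sum (fun i _ => hstep i)
      _ = ε * (∑ i : Fin 2, (sv z i) ⬝ᵥ (C *ᵥ (sv z i)))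
          + (1/(2*ε*lamMin Bs)) * (∑ i : Fin 2, (sv b i) ⬝ᵥ (sv b i)) := by
          rw [Finset.sum_add_distrib, ← Finset.mul_sum, ← Finset.mul_sum]
  -- Lipschitz bound for the nonlinearity, pointwise in the index
  have hfvec_sq : ∀ (w' : ℕ → Fin 2 → ℝ) (m : ℕ),
      (∑ i, (fvec (v m + w' m) i - fvec (v m) i)^2) ≤ ∑ i, (w' m i)^2 := by
    intro w' m
    have h := fvec_contract (v m + w' m) (v m)
    simpa using h
  have hYW : ∀ (b w' : ℕ → Fin 2 → ℝ),
      (∀ m, 1 ≤ m → m ≤ n → (∑ i, (b m i)^2) ≤ ∑ i, (w' m i)^2) →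
      (∑ i : Fin 2, (sv b i) ⬝ᵥ (sv b i)) ≤ ∑ i : Fin 2, (sv w' i) ⬝ᵥ (sv w' i) := by
    intro b w' hb
    have hform : ∀ y : ℕ → Fin 2 → ℝ, (∑ i : Fin 2, (sv y i) ⬝ᵥ (sv y i))
        = ∑ k : Fin n, τ ((k:ℕ)+1) * (∑ i, (y ((k:ℕ)+1) i)^2) := by
      intro y
      simp only [dotProduct]
      rw [Finset.sum_comm]
      apply Finset.sum_congr rfl
      intro k _
      rw [Finset.mul_sum]
      apply Finset.sum_congr rfl
      intro i _
      have hms := Real.mul_self_sqrt (le_of_lt (hτn ((k:ℕ)+1) (by omega) (by omega)))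
      simp only [hsv]
      calc Real.sqrt (τ ((k:ℕ)+1)) * y ((k:ℕ)+1) i * (Real.sqrt (τ ((k:ℕ)+1)) * y ((k:ℕ)+1) i)
          = (Real.sqrt (τ ((k:ℕ)+1)) * Real.sqrt (τ ((k:ℕ)+1))) * (y ((k:ℕ)+1) i * y ((k:ℕ)+1) i) := by ring
        _ = τ ((k:ℕ)+1) * (y ((k:ℕ)+1) i)^2 := by rw [hms]; ring
    rw [hform b, hform w']
    exact Finset.sum_le_sum fun k _ =>
      mul_le_mul_of_nonneg_left (hb ((k:ℕ)+1) (by omega) (by omega))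
        (le_of_lt (hτn _ (by omega) (by omega)))
  -- the key inequality, for an arbitrary perturbation w'
  have key : ∀ ε : ℝ, 0 < ε → ∀ w' : ℕ → Fin 2 → ℝ,
      ∑ k ∈ Finset.Icc 1 n, ∑ j ∈ Finset.Icc 1 k,
          th τ r k (k - j) * ∑ i, z k i * (fvec (v j + w' j) i - fvec (v j) i)
        ≤ ∑ k ∈ Finset.Icc 1 n, ∑ j ∈ Finset.Icc 1 k,
            th τ r k (k - j) *
              (ε * ∑ i, z k i * z j i + (Mr / ε) * ∑ i, w' k i * w' j i) := by
    intro ε hε w'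
    have hbz := hbridge z (fun m i => fvec (v m + w' m) i - fvec (v m) i)
    have hbzz := hbridge z z
    have hbww := hbridge w' w'
    have hsplit : ∑ k ∈ Finset.Icc 1 n, ∑ j ∈ Finset.Icc 1 k,
        th τ r k (k - j) * (ε * ∑ i, z k i * z j i + (Mr / ε) * ∑ i, w' k i * w' j i)
        = ε * (∑ k ∈ Finset.Icc 1 n, ∑ j ∈ Finset.Icc 1 k, th τ r k (k-j) * (∑ i, z k i * z j i))
          + (Mr/ε) * (∑ k ∈ Finset.Icc 1 n, ∑ j ∈ Finset.Icc 1 k, th τ r k (k-j) * (∑ i, w' k i * w' j i)) := by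
      rw [Finset.mul_sum, Finset.mul_sum, ← Finset.sum_add_distrib]
      apply Finset.sum_congr rfl
      intro k _
      rw [Finset.mul_sum, Finset.mul_sum, ← Finset.sum_add_distrib]
      apply Finset.sum_congr rfl
      intro j _
      ring
    rw [hsplit, hbzz, hbww]
    have hm := master ε hε (fun m i => fvec (v m + w' m) i - fvec (v m) i)
    have hg := hYW (fun m i => fvec (v m + w' m) i - fvec (v m) i) w'
      (fun m _ _ => hfvec_sq w' m)
    have hw2 : (∑ i : Fin 2, (sv w' i) ⬝ᵥ (sv w' i))
        ≤ (2 * lamMax (Aᵀ * A) / lamMin Bs) * (∑ i : Fin 2, (sv w' i) ⬝ᵥ (C *ᵥ (sv w' i))) := by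
      rw [Finset.mul_sum]
      exact Finset.sum_le_sum fun i _ => hWbound (sv w' i)
    have hQw_nn : 0 ≤ ∑ i : Fin 2, (sv w' i) ⬝ᵥ (C *ᵥ (sv w' i)) :=
      Finset.sum_nonneg fun i _ => hQnn _
    have hcpos : (0:ℝ) ≤ 1/(2*ε*lamMin Bs) := by positivity
    have harith : (1/(2*ε*lamMin Bs)) * (2 * lamMax (Aᵀ * A) / lamMin Bs) = Mrq r n / ε := by
      rw [hMrqval]
      field_simp
    calc ∑ k ∈ Finset.Icc 1 n, ∑ j ∈ Finset.Icc 1 k,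
          th τ r k (k - j) * ∑ i, z k i * (fvec (v j + w' j) i - fvec (v j) i)
        = ∑ i : Fin 2, (sv z i) ⬝ᵥ (C *ᵥ (sv (fun m i => fvec (v m + w' m) i - fvec (v m) i) i)) := hbz
      _ ≤ ε * (∑ i : Fin 2, (sv z i) ⬝ᵥ (C *ᵥ (sv z i)))
          + (1/(2*ε*lamMin Bs)) * (∑ i : Fin 2,
            (sv (fun m i => fvec (v m + w' m) i - fvec (v m) i) i) ⬝ᵥ
            (sv (fun m i => fvec (v m + w' m) i - fvec (v m) i) i)) := hm
      _ ≤ ε * (∑ i : Fin 2, (sv z i) ⬝ᵥ (C *ᵥ (sv z i)))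
          + (1/(2*ε*lamMin Bs)) * (∑ i : Fin 2, (sv w' i) ⬝ᵥ (sv w' i)) := by
          have := mul_le_mul_of_nonneg_left hg hcpos
          linarith
      _ ≤ ε * (∑ i : Fin 2, (sv z i) ⬝ᵥ (C *ᵥ (sv z i)))
          + (1/(2*ε*lamMin Bs)) * ((2 * lamMax (Aᵀ * A) / lamMin Bs)
            * (∑ i : Fin 2, (sv w' i) ⬝ᵥ (C *ᵥ (sv w' i)))) := by
          have := mul_le_mul_of_nonneg_left hw2 hcpos
          linarith
      _ = ε * (∑ i : Fin 2, (sv z i) ⬝ᵥ (C *ᵥ (sv z i)))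
          + (Mrq r n / ε) * (∑ i : Fin 2, (sv w' i) ⬝ᵥ (C *ᵥ (sv w' i))) := by
          rw [← mul_assoc, harith]
      _ ≤ ε * (∑ i : Fin 2, (sv z i) ⬝ᵥ (C *ᵥ (sv z i)))
          + (Mr / ε) * (∑ i : Fin 2, (sv w' i) ⬝ᵥ (C *ᵥ (sv w' i))) := by
          have h1 : Mrq r n / ε ≤ Mr / ε := by gcongr
          exact add_le_add le_rfl (mul_le_mul_of_nonneg_right h1 hQw_nn)
  refine ⟨fun ε hε => key ε hε w, ?_⟩
  have h := key (Real.sqrt Mr) (Real.sqrt_pos.mpr hMr_pos) z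
  have hsq : Mr / Real.sqrt Mr = Real.sqrt Mr := Real.div_sqrt
  have hre : ∑ k ∈ Finset.Icc 1 n, ∑ j ∈ Finset.Icc 1 k,
      th τ r k (k - j) * (Real.sqrt Mr * ∑ i, z k i * z j i
        + (Mr / Real.sqrt Mr) * ∑ i, z k i * z j i)
      = 2 * Real.sqrt Mr * ∑ k ∈ Finset.Icc 1 n, ∑ j ∈ Finset.Icc 1 k,
          th τ r k (k - j) * ∑ i, z k i * z j i := by
    rw [Finset.mul_sum]
    apply Finset.sum_congr rfl
    intro k _
    rw [Finset.mul_sum]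
    apply Finset.sum_congr rfl
    intro j _
    rw [hsq]
    ring
  calc ∑ k ∈ Finset.Icc 1 n, ∑ j ∈ Finset.Icc 1 k,
      th τ r k (k - j) * ∑ i, z k i * (fvec (v j + z j) i - fvec (v j) i)
      ≤ ∑ k ∈ Finset.Icc 1 n, ∑ j ∈ Finset.Icc 1 k,
          th τ r k (k - j) * (Real.sqrt Mr * ∑ i, z k i * z j i
            + (Mr / Real.sqrt Mr) * ∑ i, z k i * z j i) := h
    _ = 2 * Real.sqrt Mr * ∑ k ∈ Finset.Icc 1 n, ∑ j ∈ Finset.Icc 1 k,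
          th τ r k (k - j) * ∑ i, z k i * z j i := hre
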